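/- Let P be a triangle in a Euclidean plane with vertices a, b, c and let f be an affine linear function on the plane with f(a) < f(b) < f(c), such that the gradient of f (with respect to the Euclidean metric) is not parallel to any edge of P. If the edge bc has an in-flow (i.e., the negative gradient of f, evaluated at interior points of the edge bc, points out of the triangle P across bc), then the interior angle of P at the vertex b is strictly greater than π/2. -/

import Mathlib

open EuclideanGeometry Real Set

/-- The edge `e` (a relatively open segment) of the region `P` has an *in-flow* for the
(constant) negative gradient field `-g`: from points of `e`, flowing along `-g` for small
positive time one does not enter the interior of `P`. -/
def HasInFlow (P : Set (EuclideanSpace ℝ (Fin 2))) (g : EuclideanSpace ℝ (Fin 2))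
    (e : Set (EuclideanSpace ℝ (Fin 2))) : Prop :=
  ∀ x ∈ e, ∀ᶠ t in nhdsWithin (0 : ℝ) (Set.Ioi 0), x + t • (-g) ∉ interior P

set_option maxHeartbeats 1600000 in
/-- For a nondegenerate triangle `abc` in the Euclidean plane and an affine
linear function `f` with gradient `g ≠ 0`, `f(a) < f(b) < f(c)`, gradient not parallel to
any edge: if the edge `bc` has an in-flow, then the interior angle at `b` exceeds `π/2`. -/
theorem stmt3 (a b c g : EuclideanSpace ℝ (Fin 2)) (c₀ : ℝ)
    (f : EuclideanSpace ℝ (Fin 2) → ℝ)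
    (hf : ∀ x, f x = inner ℝ g x + c₀)
    (hg : g ≠ 0)
    (hnd : AffineIndependent ℝ ![a, b, c])
    (hfab : f a < f b) (hfbc : f b < f c)
    (hpar_ab : ∀ t : ℝ, g ≠ t • (b - a))
    (hpar_bc : ∀ t : ℝ, g ≠ t • (c - b))
    (hpar_ac : ∀ t : ℝ, g ≠ t • (c - a))
    (hin : HasInFlow (convexHull ℝ {a, b, c}) g (openSegment ℝ b c)) :
    π / 2 < ∠ a b c := by
  classical
  -- basic inner product inequalities
  have hga : (inner ℝ g (a - b) : ℝ) < 0 := by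
    have h1 := hfab
    rw [hf a, hf b] at h1
    have : (inner ℝ g a : ℝ) < inner ℝ g b := by linarith
    have := sub_neg.mpr this
    rwa [← inner_sub_right] at this
  have hgc : (0 : ℝ) < inner ℝ g (c - b) := by
    have h1 := hfbc
    rw [hf b, hf c] at h1
    have : (inner ℝ g b : ℝ) < inner ℝ g c := by linarith
    have := sub_pos.mpr this
    rwa [← inner_sub_right] at this
  -- distinctness
  have hab : a ≠ b := hnd.injective.ne (show (0 : Fin 3) ≠ 1 by decide)
  have hbc : b ≠ c := hnd.injective.ne (show (1 : Fin 3) ≠ 2 by decide)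
  -- affine basis
  have htot : affineSpan ℝ (Set.range ![a, b, c]) = ⊤ := by
    rw [hnd.affineSpan_eq_top_iff_card_eq_finrank_add_one]
    simp
  let B : AffineBasis (Fin 3) ℝ (EuclideanSpace ℝ (Fin 2)) := ⟨![a, b, c], hnd, htot⟩
  have hB0 : B 0 = a := rfl
  have hB1 : B 1 = b := rfl
  have hB2 : B 2 = c := rfl
  have c0a : B.coord 0 a = 1 := by rw [← hB0]; exact B.coord_apply_eq 0
  have c0b : B.coord 0 b = 0 := by rw [← hB1]; exact B.coord_apply_ne (by decide)
  have c0c : B.coord 0 c = 0 := by rw [← hB2]; exact B.coord_apply_ne (by decide)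
  have c1b : B.coord 1 b = 1 := by rw [← hB1]; exact B.coord_apply_eq 1
  have c1c : B.coord 1 c = 0 := by rw [← hB2]; exact B.coord_apply_ne (by decide)
  have c2a : B.coord 2 a = 0 := by rw [← hB0]; exact B.coord_apply_ne (by decide)
  have c2b : B.coord 2 b = 0 := by rw [← hB1]; exact B.coord_apply_ne (by decide)
  have c2c : B.coord 2 c = 1 := by rw [← hB2]; exact B.coord_apply_eq 2
  -- linear parts of the coordinates on the edge vectors
  have l0v : (B.coord 0).linear (a - b) = 1 := by
    have h := (B.coord 0).linearMap_vsub a b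
    simpa [vsub_eq_sub, c0a, c0b] using h
  have l0e : (B.coord 0).linear (c - b) = 0 := by
    have h := (B.coord 0).linearMap_vsub c b
    simpa [vsub_eq_sub, c0c, c0b] using h
  have l2v : (B.coord 2).linear (a - b) = 0 := by
    have h := (B.coord 2).linearMap_vsub a b
    simpa [vsub_eq_sub, c2a, c2b] using h
  have l2e : (B.coord 2).linear (c - b) = 1 := by
    have h := (B.coord 2).linearMap_vsub c b
    simpa [vsub_eq_sub, c2c, c2b] using h
  -- linear independence of the edge vectors
  have hli : ∀ s t : ℝ, s • (a - b) + t • (c - b) = 0 → s = 0 ∧ t = 0 := by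
    intro s t h
    have h0 := congrArg (B.coord 0).linear h
    have h2 := congrArg (B.coord 2).linear h
    rw [map_add, map_smul, map_smul, l0v, l0e, map_zero] at h0
    rw [map_add, map_smul, map_smul, l2v, l2e, map_zero] at h2
    simp only [smul_eq_mul, mul_one, mul_zero, add_zero, zero_add] at h0 h2
    exact ⟨h0, h2⟩
  -- the edge vectors span, so write g in terms of them
  have hsp : Submodule.span ℝ ({a - b, c - b} : Set (EuclideanSpace ℝ (Fin 2))) = ⊤ := by
    have hli' : LinearIndependent ℝ ![a - b, c - b] := LinearIndependent.pair_iff.mpr hli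
    have h := hli'.span_eq_top_of_card_eq_finrank (by simp)
    have hr : Set.range ![a - b, c - b] = ({a - b, c - b} : Set (EuclideanSpace ℝ (Fin 2))) := by
      ext x
      constructor
      · rintro ⟨i, rfl⟩; fin_cases i <;> simp
      · rintro (rfl | rfl)
        · exact ⟨0, rfl⟩
        · exact ⟨1, rfl⟩
    rwa [hr] at h
  obtain ⟨p, q, hpq⟩ := Submodule.mem_span_pair.mp
    (by rw [hsp]; exact Submodule.mem_top : g ∈ Submodule.span ℝ ({a - b, c - b} : Set (EuclideanSpace ℝ (Fin 2))))
  -- interior of the triangle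
  have hrange : Set.range ⇑B = ({a, b, c} : Set (EuclideanSpace ℝ (Fin 2))) := by
    ext x
    constructor
    · rintro ⟨i, rfl⟩; fin_cases i <;> simp [hB0, hB1, hB2]
    · rintro (rfl | rfl | rfl)
      · exact ⟨0, rfl⟩
      · exact ⟨1, rfl⟩
      · exact ⟨2, rfl⟩
  have hInt : interior (convexHull ℝ ({a, b, c} : Set (EuclideanSpace ℝ (Fin 2))))
      = {x | ∀ i, 0 < B.coord i x} := by
    rw [← hrange]; exact B.interior_convexHull
  -- the midpoint of bc
  set x : EuclideanSpace ℝ (Fin 2) := midpoint ℝ b c with hxdef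
  have hx : x ∈ openSegment ℝ b c := by
    refine ⟨1/2, 1/2, by norm_num, by norm_num, by norm_num, ?_⟩
    rw [hxdef, midpoint_eq_smul_add, smul_add]
    norm_num
  have hx0 : B.coord 0 x = 0 := by
    rw [hxdef, AffineMap.map_midpoint, c0b, c0c]; simp
  have hx1 : B.coord 1 x = 1/2 := by
    rw [hxdef, AffineMap.map_midpoint, c1b, c1c, midpoint_eq_smul_add]; norm_num
  have hx2 : B.coord 2 x = 1/2 := by
    rw [hxdef, AffineMap.map_midpoint, c2b, c2c, midpoint_eq_smul_add]; norm_num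
  -- how coordinates evolve along the flow
  have hcoord : ∀ (i : Fin 3) (t : ℝ),
      B.coord i (x + t • (-g)) = B.coord i x - t * (B.coord i).linear g := by
    intro i t
    have hrw : x + t • (-g) = (t • (-g)) +ᵥ x := by
      rw [vadd_eq_add, add_comm]
    rw [hrw, AffineMap.map_vadd]
    simp [smul_neg, map_smul, map_neg, vadd_eq_add, smul_eq_mul]
    ring
  -- in-flow forces the 0th coordinate of g's direction to be nonneg
  have key : 0 ≤ (B.coord 0).linear g := by
    by_contra hneg
    push_neg at hneg
    have h0' : ∀ᶠ t in nhdsWithin (0 : ℝ) (Set.Ioi 0), 0 < B.coord 0 (x + t • (-g)) := by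
      filter_upwards [eventually_mem_nhdsWithin] with t ht
      rw [hcoord, hx0]
      have : (0 : ℝ) < t := ht
      nlinarith
    have h12 : ∀ i : Fin 3, i ≠ 0 → B.coord i x = 1/2 → ∀ᶠ t in nhdsWithin (0 : ℝ) (Set.Ioi 0),
        0 < B.coord i (x + t • (-g)) := by
      intro i _ hxi
      have hcont : ContinuousAt (fun t : ℝ => B.coord i (x + t • (-g))) 0 := by
        apply (B.coord i).continuous_of_finiteDimensional.continuousAt.comp
        fun_prop
      have hval : (fun t : ℝ => B.coord i (x + t • (-g))) 0 = 1/2 := by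
        simpa using hxi
      have := hcont.eventually (eventually_gt_nhds (show (0:ℝ) < (fun t : ℝ => B.coord i (x + t • (-g))) 0 by rw [hval]; norm_num))
      exact this.filter_mono nhdsWithin_le_nhds
    have h1' := h12 1 (by decide) hx1
    have h2' := h12 2 (by decide) hx2
    have hmem : ∀ᶠ t in nhdsWithin (0 : ℝ) (Set.Ioi 0),
        x + t • (-g) ∈ interior (convexHull ℝ ({a, b, c} : Set (EuclideanSpace ℝ (Fin 2)))) := by
      filter_upwards [h0', h1', h2'] with t ht0 ht1 ht2
      rw [hInt]
      intro i
      fin_cases i <;> assumption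
    obtain ⟨t, htmem, htnot⟩ := (hmem.and (hin x hx)).exists
    exact htnot htmem
  -- hence p ≥ 0, and p ≠ 0 by non-parallelism, so p > 0
  have hLg : (B.coord 0).linear g = p := by
    have h := congrArg (B.coord 0).linear hpq
    rw [map_add, map_smul, map_smul, l0v, l0e] at h
    simp only [smul_eq_mul, mul_one, mul_zero, add_zero] at h
    exact h.symm
  have hp : 0 < p := by
    have hple : (0:ℝ) ≤ p := by rw [← hLg]; exact key
    rcases lt_or_eq_of_le hple with h | h
    · exact h
    · exfalso
      apply hpar_bc q
      rw [← hpq, ← h]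
      simp
  -- inner product algebra
  have innpos : ∀ w : EuclideanSpace ℝ (Fin 2), w ≠ 0 → (0:ℝ) < inner ℝ w w := by
    intro w hw
    rw [real_inner_self_eq_norm_mul_norm]
    exact mul_pos (norm_pos_iff.mpr hw) (norm_pos_iff.mpr hw)
  set v : EuclideanSpace ℝ (Fin 2) := a - b with hv
  set e : EuclideanSpace ℝ (Fin 2) := c - b with he
  have hA : (0:ℝ) < inner ℝ v v := innpos v (sub_ne_zero.mpr hab)
  have hC : (0:ℝ) < inner ℝ e e := innpos e (sub_ne_zero.mpr (Ne.symm hbc))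
  have e1 : (inner ℝ g v : ℝ) = p * (inner ℝ v v : ℝ) + q * (inner ℝ v e : ℝ) := by
    rw [← hpq, inner_add_left, real_inner_smul_left, real_inner_smul_left, real_inner_comm e v]
  have e2 : (inner ℝ g e : ℝ) = p * (inner ℝ v e : ℝ) + q * (inner ℝ e e : ℝ) := by
    rw [← hpq, inner_add_left, real_inner_smul_left, real_inner_smul_left]
  -- strict Cauchy-Schwarz via linear independence
  have hACI : (0:ℝ) < (inner ℝ v v : ℝ) * (inner ℝ e e : ℝ) - (inner ℝ v e : ℝ) * (inner ℝ v e : ℝ) := by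
    have hw : (inner ℝ e e : ℝ) • v - (inner ℝ v e : ℝ) • e ≠ 0 := by
      intro h
      have h' : (inner ℝ e e : ℝ) • v + (-(inner ℝ v e : ℝ)) • e = 0 := by
        rw [neg_smul, ← sub_eq_add_neg]; exact h
      exact hC.ne' (hli _ _ h').1
    have hpos := innpos _ hw
    have hexp : (inner ℝ ((inner ℝ e e : ℝ) • v - (inner ℝ v e : ℝ) • e)
        ((inner ℝ e e : ℝ) • v - (inner ℝ v e : ℝ) • e) : ℝ)
        = (inner ℝ e e : ℝ) * (inner ℝ e e : ℝ) * (inner ℝ v v : ℝ)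
          - 2 * (inner ℝ e e : ℝ) * (inner ℝ v e : ℝ) * (inner ℝ v e : ℝ)
          + (inner ℝ v e : ℝ) * (inner ℝ v e : ℝ) * (inner ℝ e e : ℝ) := by
      simp only [inner_sub_left, inner_sub_right, real_inner_smul_left, real_inner_smul_right]
      rw [real_inner_comm e v]
      ring
    rw [hexp] at hpos
    generalize hE : (inner ℝ e e : ℝ) = E at hpos hC ⊢
    generalize hV : (inner ℝ v v : ℝ) = V at hpos ⊢
    generalize hI : (inner ℝ v e : ℝ) = I at hpos ⊢
    nlinarith
  have hIneg : (inner ℝ v e : ℝ) < 0 := by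
    by_contra hInn
    push_neg at hInn
    generalize hE : (inner ℝ e e : ℝ) = E at hACI hC e2 ⊢
    generalize hV : (inner ℝ v v : ℝ) = V at hACI hA e1 ⊢
    generalize hI : (inner ℝ v e : ℝ) = I at hACI e1 e2 hInn ⊢
    generalize hGV : (inner ℝ g v : ℝ) = GV at hga e1 ⊢
    generalize hGE : (inner ℝ g e : ℝ) = GE at hgc e2 ⊢
    nlinarith [mul_pos hp hACI, mul_pos hC (neg_pos.mpr hga),
      mul_nonneg hInn (le_of_lt hgc), e1, e2]
  -- conclude about the angle
  have hangle : ∠ a b c = Real.arccos ((inner ℝ v e : ℝ) / (‖v‖ * ‖e‖)) := by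
    rw [EuclideanGeometry.angle, InnerProductGeometry.angle]
    congr 1
  rw [hangle, Real.arccos_eq_pi_div_two_sub_arcsin]
  have hnv : 0 < ‖v‖ := norm_pos_iff.mpr (sub_ne_zero.mpr hab)
  have hne : 0 < ‖e‖ := norm_pos_iff.mpr (sub_ne_zero.mpr (Ne.symm hbc))
  have : Real.arcsin ((inner ℝ v e : ℝ) / (‖v‖ * ‖e‖)) < 0 :=
    Real.arcsin_lt_zero.mpr (div_neg_of_neg_of_pos hIneg (mul_pos hnv hne))
  linarith
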